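/- Let U₂: ℤ⁴ → ℤ⁴ be the linear map given by the matrix with rows (1, 0, 0, 0), (0, 0, 0, 1), (2, 0, −1, 2), (0, 1, −1, 0), let S₂ = ω₂ ∩ ℤ⁴, and let S_A be the additive subsemigroup of ℤ⁴ generated by 𝒢₂ = {g₁, g₂, g₃, g₄, g₅, g₆, g₇, g₃−g₁, g₆−g₁, g₃−g₂, g₅−g₄, g₆−g₄, g₆−g₇}. Then the image U₂(S₂) equals the saturation of S_A, namely the set {x ∈ ℤ⁴ : n·x ∈ S_A for some positive integer n}. In particular the saturation of S_A is a pointed saturated affine semigroup isomorphic to S₂. -/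

import Mathlib

/-- The seven lattice points `g₁, …, g₇` (0-indexed as `g 0, …, g 6`). -/
def g : Fin 7 → (Fin 4 → ℤ) :=
  ![![1,0,0,0], ![0,1,0,0], ![1,1,2,0], ![0,0,0,1],
    ![0,2,2,1], ![1,1,1,0], ![0,1,1,1]]

/-- Coercion of an integer vector to a real vector. -/
def toR (v : Fin 4 → ℤ) : Fin 4 → ℝ := fun j => (v j : ℝ)

/-- The convex cone generated by a finite family of vectors in `ℝ⁴`. -/
def cone {n : ℕ} (v : Fin n → (Fin 4 → ℝ)) : Set (Fin 4 → ℝ) :=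
  {x | ∃ lam : Fin n → ℝ, (∀ i, 0 ≤ lam i) ∧ x = ∑ i, lam i • v i}

/-- The cone `ω₂` generated by `g₁, …, g₅`. -/
def ω₂ : Set (Fin 4 → ℝ) := cone (fun i : Fin 5 => toR (g (Fin.castLE (by norm_num) i)))

/-- The semigroup `S₂ = ω₂ ∩ ℤ⁴`. -/
def S₂ : Set (Fin 4 → ℤ) := {v | toR v ∈ ω₂}

/-- The matrix `U₂` (acting on column vectors). -/
def U₂ : Matrix (Fin 4) (Fin 4) ℤ :=
  !![1, 0, 0, 0;
     0, 0, 0, 1;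
     2, 0, -1, 2;
     0, 1, -1, 0]

/-- The generating set `𝒢₂`. -/
def G₂ : Set (Fin 4 → ℤ) :=
  {g 0, g 1, g 2, g 3, g 4, g 5, g 6,
   g 2 - g 0, g 5 - g 0, g 2 - g 1, g 4 - g 3, g 5 - g 3, g 5 - g 6}

/-- The subsemigroup `S_A` of `ℤ⁴` generated by `𝒢₂`. -/
def SA : AddSubmonoid (Fin 4 → ℤ) := AddSubmonoid.closure G₂

/-- The saturation of `S_A` in `ℤ⁴`. -/
def satSA : Set (Fin 4 → ℤ) := {x | ∃ n : ℕ, 0 < n ∧ n • x ∈ SA}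

/-! ### Auxiliary material -/

/-- The first five generators. -/
def G5 : Fin 5 → (Fin 4 → ℤ) := ![g 0, g 1, g 2, g 3, g 4]

/-- The images `w i = U₂ (g i)` of the five generators. -/
def w : Fin 5 → (Fin 4 → ℤ) :=
  ![![1,0,2,0], ![0,0,0,1], ![1,0,0,-1], ![0,1,2,0], ![0,1,0,0]]

lemma fin4_mk0 (h : 0 < 4) : (⟨0,h⟩ : Fin 4) = 0 := rfl
lemma fin4_mk1 (h : 1 < 4) : (⟨1,h⟩ : Fin 4) = 1 := rfl
lemma fin4_mk2 (h : 2 < 4) : (⟨2,h⟩ : Fin 4) = 2 := rfl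
lemma fin4_mk3 (h : 3 < 4) : (⟨3,h⟩ : Fin 4) = 3 := rfl

lemma castLE_eq (h : 5 ≤ 7) (i : Fin 5) : g (Fin.castLE h i) = G5 i := by
  fin_cases i <;> rfl

lemma omega2_mem (x : Fin 4 → ℝ) :
    x ∈ ω₂ ↔ ∃ lam : Fin 5 → ℝ, (∀ i, 0 ≤ lam i) ∧ x = ∑ i, lam i • toR (G5 i) := by
  simp only [ω₂, cone, castLE_eq, Set.mem_setOf_eq]

lemma mulVec_eval (x : Fin 4 → ℤ) :
    U₂.mulVec x = ![x 0, x 3, 2*x 0 - x 2 + 2*x 3, x 1 - x 2] := by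
  funext j
  fin_cases j <;>
    simp [U₂, Matrix.mulVec, dotProduct, Fin.sum_univ_four] <;> ring

/-- The polyhedral description of the transformed cone, as an additive submonoid. -/
def PM : AddSubmonoid (Fin 4 → ℤ) where
  carrier := {y | 0 ≤ y 2 ∧ 0 ≤ y 1 ∧ 0 ≤ y 0 ∧ 0 ≤ y 0 + y 3 ∧
    0 ≤ 2*y 0 + 2*y 1 - y 2 ∧ 0 ≤ 2*y 0 + 2*y 1 - y 2 + 2*y 3}
  zero_mem' := by norm_num
  add_mem' := by
    intro a b ha hb
    simp only [Set.mem_setOf_eq, Pi.add_apply] at *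
    omega

lemma w_mem_G₂ : ∀ i, w i ∈ G₂ := by
  intro i
  fin_cases i
  · refine Set.mem_insert_iff.2 (Or.inr ?_)
    have : w 0 = g 2 - g 1 := by funext j; fin_cases j <;> rfl
    simp only [show (⟨0, by norm_num⟩ : Fin 5) = 0 from rfl, this, G₂]
    tauto
  · have : w 1 = g 3 := by funext j; fin_cases j <;> rfl
    simp only [show (⟨1, by norm_num⟩ : Fin 5) = 1 from rfl, this, G₂]
    tauto
  · have : w 2 = g 5 - g 6 := by funext j; fin_cases j <;> rfl
    simp only [show (⟨2, by norm_num⟩ : Fin 5) = 2 from rfl, this, G₂]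
    tauto
  · have : w 3 = g 2 - g 0 := by funext j; fin_cases j <;> rfl
    simp only [show (⟨3, by norm_num⟩ : Fin 5) = 3 from rfl, this, G₂]
    tauto
  · have : w 4 = g 1 := by funext j; fin_cases j <;> rfl
    simp only [show (⟨4, by norm_num⟩ : Fin 5) = 4 from rfl, this, G₂]
    tauto

lemma G₂_subset_PM : G₂ ⊆ (PM : Set (Fin 4 → ℤ)) := by
  intro x hx
  simp only [G₂, Set.mem_insert_iff, Set.mem_singleton_iff] at hx
  rcases hx with h|h|h|h|h|h|h|h|h|h|h|h|h <;> subst h <;>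
    refine ⟨?_, ?_, ?_, ?_, ?_, ?_⟩ <;> decide

lemma SA_le_PM : SA ≤ PM := AddSubmonoid.closure_le.2 G₂_subset_PM

/-- Master decomposition: any lattice point of the polyhedral cone, doubled,
is a nonnegative integer combination of the `w i`. -/
lemma master (y : Fin 4 → ℤ) (hy : y ∈ (PM : Set (Fin 4 → ℤ))) :
    ∃ c : Fin 5 → ℤ, (∀ i, 0 ≤ c i) ∧ (2:ℤ) • y = ∑ i, c i • w i := by
  obtain ⟨h1, h2, h3, h4, h5, h6⟩ := hy
  rcases le_total (y 2) (2 * y 1) with hc | hc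
  · refine ⟨![0, 2*(y 0 + y 3), 2*y 0, y 2, 2*y 1 - y 2], ?_, ?_⟩
    · intro i; fin_cases i <;> simp <;> omega
    · funext j
      simp only [Fin.sum_univ_five, Pi.smul_apply, Pi.add_apply, smul_eq_mul, w]
      fin_cases j <;> simp [Matrix.vecHead, Matrix.vecTail, fin4_mk0, fin4_mk1, fin4_mk2, fin4_mk3] <;> omega
  · refine ⟨![y 2 - 2*y 1, 2*y 0 + 2*y 1 - y 2 + 2*y 3, 2*y 0 + 2*y 1 - y 2, 2*y 1, 0],
      ?_, ?_⟩
    · intro i; fin_cases i <;> simp <;> omega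
    · funext j
      simp only [Fin.sum_univ_five, Pi.smul_apply, Pi.add_apply, smul_eq_mul, w]
      fin_cases j <;> simp [Matrix.vecHead, Matrix.vecTail, fin4_mk0, fin4_mk1, fin4_mk2, fin4_mk3] <;> omega

lemma key_cast (t : ℤ) (ht : (0:ℝ) ≤ (t:ℝ)) : 0 ≤ t := by exact_mod_cast ht

lemma image_mem_PM (x : Fin 4 → ℤ) (hx : x ∈ S₂) :
    U₂.mulVec x ∈ (PM : Set (Fin 4 → ℤ)) := by
  obtain ⟨lam, hl, hsum⟩ := (omega2_mem (toR x)).1 hx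
  have hx0 := congrFun hsum 0
  have hx1 := congrFun hsum 1
  have hx2 := congrFun hsum 2
  have hx3 := congrFun hsum 3
  simp only [toR, Fin.sum_univ_five, Pi.smul_apply, Pi.add_apply, smul_eq_mul, G5, g] at hx0 hx1 hx2 hx3
  simp [Matrix.vecHead, Matrix.vecTail] at hx0 hx1 hx2 hx3
  have h0 := hl 0; have h1 := hl 1; have h2 := hl 2; have h3 := hl 3; have h4 := hl 4
  refine ⟨?_, ?_, ?_, ?_, ?_, ?_⟩ <;>
    · simp only [mulVec_eval, Matrix.cons_val_zero, Matrix.cons_val_one, Matrix.head_cons,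
        Matrix.cons_val_two, Matrix.tail_cons, Matrix.cons_val_three]
      apply key_cast
      push_cast
      linarith [hx0, hx1, hx2, hx3, h0, h1, h2, h3, h4]


/-- Every point of the polyhedron is in the image of `S₂`. -/
lemma PM_subset_image (y : Fin 4 → ℤ) (hy : y ∈ (PM : Set (Fin 4 → ℤ))) :
    ∃ x ∈ S₂, U₂.mulVec x = y := by
  obtain ⟨c, hc, hm⟩ := master y hy
  have m0 := congrFun hm 0
  have m1 := congrFun hm 1
  have m2 := congrFun hm 2
  have m3 := congrFun hm 3
  simp only [Fin.sum_univ_five, Pi.smul_apply, Pi.add_apply, smul_eq_mul, w] at m0 m1 m2 m3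
  simp [Matrix.vecHead, Matrix.vecTail] at m0 m1 m2 m3
  have r0 : 2*(y 0:ℝ) = (c 0:ℝ) + (c 2:ℝ) := by exact_mod_cast m0
  have r1 : 2*(y 1:ℝ) = (c 3:ℝ) + (c 4:ℝ) := by exact_mod_cast m1
  have r2 : 2*(y 2:ℝ) = (c 0:ℝ)*2 + (c 3:ℝ)*2 := by exact_mod_cast m2
  have r3 : 2*(y 3:ℝ) = (c 1:ℝ) - (c 2:ℝ) := by exact_mod_cast m3
  refine ⟨![y 0, 2*y 0 + 2*y 1 - y 2 + y 3, 2*y 0 + 2*y 1 - y 2, y 1], ?_, ?_⟩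
  · show toR _ ∈ ω₂
    rw [omega2_mem]
    refine ⟨fun i => (c i : ℝ)/2, fun i => div_nonneg (by exact_mod_cast hc i) (by norm_num), ?_⟩
    funext j
    simp only [toR, Fin.sum_univ_five, Pi.smul_apply, Pi.add_apply, smul_eq_mul, G5, g]
    fin_cases j <;>
      simp [Matrix.vecHead, Matrix.vecTail, fin4_mk0, fin4_mk1, fin4_mk2, fin4_mk3] <;>
      push_cast <;> linarith [r0, r1, r2, r3]
  · rw [mulVec_eval]
    funext j
    fin_cases j <;>
      simp [Matrix.vecHead, Matrix.vecTail, fin4_mk0, fin4_mk1, fin4_mk2, fin4_mk3] <;>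
      omega

/-- The polyhedron is inside the saturation of `S_A`. -/
lemma PM_subset_satSA (y : Fin 4 → ℤ) (hy : y ∈ (PM : Set (Fin 4 → ℤ))) : y ∈ satSA := by
  obtain ⟨c, hc, hm⟩ := master y hy
  refine ⟨2, by norm_num, ?_⟩
  have h2 : (2:ℕ) • y = (2:ℤ) • y := by
    rw [← natCast_zsmul]; norm_num
  rw [h2, hm]
  refine AddSubmonoid.sum_mem _ (fun i _ => ?_)
  have : c i • w i = (c i).toNat • w i := by
    rw [← natCast_zsmul, Int.toNat_of_nonneg (hc i)]
  rw [this]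
  exact AddSubmonoid.nsmul_mem _ (AddSubmonoid.subset_closure (w_mem_G₂ i)) _

lemma satSA_subset_PM (y : Fin 4 → ℤ) (hy : y ∈ satSA) : y ∈ (PM : Set (Fin 4 → ℤ)) := by
  obtain ⟨n, hn, hmem⟩ := hy
  have h := SA_le_PM hmem
  obtain ⟨h1, h2, h3, h4, h5, h6⟩ := h
  have hn' : 0 < (n:ℤ) := by exact_mod_cast hn
  simp only [Pi.smul_apply, nsmul_eq_mul] at h1 h2 h3 h4 h5 h6
  have aux : ∀ t : ℤ, 0 ≤ (n:ℤ) * t → 0 ≤ t := by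
    intro t ht
    by_contra hlt
    push_neg at hlt
    nlinarith
  refine ⟨aux _ h1, aux _ h2, aux _ h3, aux _ (by linarith), aux _ (by linarith),
    aux _ (by linarith)⟩

lemma satSA_eq_PM : satSA = (PM : Set (Fin 4 → ℤ)) :=
  Set.ext fun y => ⟨satSA_subset_PM y, PM_subset_satSA y⟩

/-- `U₂(S₂)` equals the saturation of `S_A`; in particular the saturation of `S_A`
is pointed and saturated (and, being the image of `S₂` under a unimodular map,
isomorphic to `S₂` as a semigroup). -/
theorem stmt_13 :
    (fun v => U₂.mulVec v) '' S₂ = satSA ∧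
    {x : Fin 4 → ℤ | x ∈ satSA ∧ -x ∈ satSA} = {0} ∧
    (∀ (x : Fin 4 → ℤ) (n : ℕ), 0 < n → n • x ∈ satSA → x ∈ satSA) := by
  refine ⟨?_, ?_, ?_⟩
  · rw [satSA_eq_PM]
    apply Set.eq_of_subset_of_subset
    · rintro _ ⟨x, hx, rfl⟩
      exact image_mem_PM x hx
    · intro y hy
      obtain ⟨x, hx, hxy⟩ := PM_subset_image y hy
      exact ⟨x, hx, hxy⟩
  · rw [satSA_eq_PM]
    apply Set.eq_of_subset_of_subset
    · rintro x ⟨⟨h1, h2, h3, h4, h5, h6⟩, ⟨n1, n2, n3, n4, n5, n6⟩⟩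
      simp only [Pi.neg_apply] at n1 n2 n3 n4 n5 n6
      funext j
      fin_cases j <;> simp [fin4_mk0, fin4_mk1, fin4_mk2, fin4_mk3] <;> omega
    · rintro x rfl
      constructor <;> refine ⟨?_, ?_, ?_, ?_, ?_, ?_⟩ <;> norm_num
  · rintro x n hn ⟨m, hm, hmem⟩
    exact ⟨m * n, Nat.mul_pos hm hn, by rwa [mul_smul]⟩
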